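/- Let π : (X,T) → (Y,T) be an almost one-to-one factor map between minimal systems. For all nonempty open U₁,…,U_d ⊆ X and all polynomial tuples p ∈ ℤ[x]^d, R_p(U₁,…,U_d) = R_p((πU₁)°, …, (πU_d)°). -/

import Mathlib

/-- The return-time set `R_p(U₁,…,U_d)` along a polynomial tuple. -/
def returnTimes {α : Type*} (T : Equiv.Perm α) {d : ℕ} (p : Fin d → Polynomial ℤ)
    (U : Fin d → Set α) : Set ℤ :=
  {n : ℤ | ∃ x : α, ∀ i : Fin d, (T ^ (p i).eval n) x ∈ U i}

/-- A system `(α, T)` is minimal if every (two-sided) orbit is dense. -/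
def IsMinimalSystem {α : Type*} [TopologicalSpace α] (T : Equiv.Perm α) : Prop :=
  ∀ x : α, Dense (Set.range fun n : ℤ => (T ^ n) x)

private lemma perm_pow_cont {α : Type*} [TopologicalSpace α] (T : Equiv.Perm α)
    (hT : Continuous T) (hT' : Continuous T.symm) (k : ℕ) :
    Continuous ⇑(T ^ k) ∧ Continuous ⇑(T ^ k).symm := by
  induction k with
  | zero => exact ⟨continuous_id, continuous_id⟩
  | succ k ih =>
    rw [pow_succ]
    exact ⟨show Continuous (⇑(T ^ k) ∘ ⇑T) from ih.1.comp hT,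
      show Continuous (⇑T.symm ∘ ⇑(T ^ k).symm) from hT'.comp ih.2⟩

private lemma perm_zpow_cont {α : Type*} [TopologicalSpace α] (T : Equiv.Perm α)
    (hT : Continuous T) (hT' : Continuous T.symm) (m : ℤ) :
    Continuous ⇑(T ^ m) ∧ Continuous ⇑(T ^ m).symm := by
  cases m with
  | ofNat k => rw [Int.ofNat_eq_coe, zpow_natCast]; exact perm_pow_cont T hT hT' k
  | negSucc k =>
    rw [zpow_negSucc]
    have h := perm_pow_cont T hT hT' (k + 1)
    exact ⟨h.2, h.1⟩

private lemma isGδ_preimage {α β : Type*} [TopologicalSpace α] [TopologicalSpace β]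
    {f : α → β} (hf : Continuous f) {s : Set β} (hs : IsGδ s) : IsGδ (f ⁻¹' s) := by
  obtain ⟨Ts, hop, hct, rfl⟩ := hs
  rw [Set.preimage_sInter]
  exact IsGδ.biInter hct fun t ht => ((hop t ht).preimage hf).isGδ

private lemma semiconj_pow {α β : Type*} (T : Equiv.Perm α) (S : Equiv.Perm β)
    (π : α → β) (hπe : π ∘ T = S ∘ π) (k : ℕ) :
    ∀ x, π ((T ^ k) x) = (S ^ k) (π x) := by
  induction k with
  | zero => intro x; simp
  | succ k ih =>
    intro x
    rw [pow_succ, pow_succ]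
    have : π (T x) = S (π x) := congrFun hπe x
    simp only [Equiv.Perm.coe_mul, Function.comp_apply]
    rw [ih (T x), this]

private lemma semiconj_zpow {α β : Type*} (T : Equiv.Perm α) (S : Equiv.Perm β)
    (π : α → β) (hπs : Function.Surjective π) (hπe : π ∘ T = S ∘ π) (m : ℤ) :
    ∀ x, π ((T ^ m) x) = (S ^ m) (π x) := by
  have hinv : π ∘ ⇑T⁻¹ = ⇑S⁻¹ ∘ π := by
    funext x
    have : π (T (T⁻¹ x)) = S (π (T⁻¹ x)) := congrFun hπe (T⁻¹ x)
    simp only [show T (T⁻¹ x) = x from T.apply_symm_apply x] at this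
    show π (T⁻¹ x) = S⁻¹ (π x)
    rw [this]
    simp
  cases m with
  | ofNat k =>
    rw [Int.ofNat_eq_coe, zpow_natCast]
    exact semiconj_pow T S π hπe k
  | negSucc k =>
    simp only [zpow_negSucc, ← inv_pow]
    exact semiconj_pow T⁻¹ S⁻¹ π hinv (k + 1)

theorem stmt_7 {α β : Type*} [MetricSpace α] [CompactSpace α]
    [MetricSpace β] [CompactSpace β]
    (T : Equiv.Perm α) (hT : Continuous T) (hT' : Continuous T.symm)
    (S : Equiv.Perm β) (hS : Continuous S) (hS' : Continuous S.symm)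
    (hmT : IsMinimalSystem T) (hmS : IsMinimalSystem S)
    (π : α → β) (hπc : Continuous π) (hπs : Function.Surjective π)
    (hπe : π ∘ T = S ∘ π)
    -- `π` is almost 1–1: on a residual set the fibers are singletons
    (h11 : ∃ Ω : Set α, Dense Ω ∧ IsGδ Ω ∧ ∀ x ∈ Ω, π ⁻¹' {π x} = {x})
    {d : ℕ} (U : Fin d → Set α)
    (hUne : ∀ i, (U i).Nonempty) (hUop : ∀ i, IsOpen (U i))
    (p : Fin d → Polynomial ℤ) :
    returnTimes T p U = returnTimes S p (fun i => interior (π '' U i)) := by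
  obtain ⟨Ω, hΩd, hΩg, hΩ1⟩ := h11
  have hTc : ∀ m : ℤ, Continuous ⇑(T ^ m) := fun m => (perm_zpow_cont T hT hT' m).1
  have hSc : ∀ m : ℤ, Continuous ⇑(S ^ m) := fun m => (perm_zpow_cont S hS hS' m).1
  have hconj : ∀ m : ℤ, ∀ x, π ((T ^ m) x) = (S ^ m) (π x) :=
    semiconj_zpow T S π hπs hπe
  -- the residual set of "good" points for a given n
  have hres : ∀ n : ℤ, Dense (⋂ i : Fin d, (⇑(T ^ (p i).eval n)) ⁻¹' Ω) := by
    intro n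
    apply dense_of_mem_residual
    refine Filter.iInter_mem.mpr fun i => residual_of_dense_Gδ
      (isGδ_preimage (hTc _) hΩg) ?_
    -- dense preimage under a homeomorphism
    rw [show ⇑(T ^ (p i).eval n) ⁻¹' Ω = (T ^ (p i).eval n).symm '' Ω from
      ((T ^ (p i).eval n).symm.image_eq_preimage_symm Ω).symm]
    exact ((T ^ (p i).eval n).symm.surjective.denseRange).dense_image
      (perm_zpow_cont T hT hT' _).2 hΩd
  -- singleton fibers: if T^m z ∈ Ω and π u = π (T^m z) then u = T^m z
  have hfiber : ∀ {z u : α}, z ∈ Ω → π u = π z → u = z := by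
    intro z u hz h
    have : u ∈ π ⁻¹' {π z} := by simpa using h
    rw [hΩ1 z hz] at this
    exact this
  ext n
  simp only [returnTimes, Set.mem_setOf_eq]
  constructor
  · rintro ⟨x, hx⟩
    -- pick a point in ⋂ T^{-mᵢ} Uᵢ whose whole orbit pieces lie in Ω
    set W : Set α := ⋂ i : Fin d, (⇑(T ^ (p i).eval n)) ⁻¹' U i with hW
    have hWo : IsOpen W := isOpen_iInter_of_finite fun i => (hUop i).preimage (hTc _)
    have hWne : W.Nonempty := ⟨x, Set.mem_iInter.mpr hx⟩
    obtain ⟨z, hzW, hzΩ⟩ := (hres n).inter_open_nonempty W hWo hWne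
    refine ⟨π z, fun i => ?_⟩
    -- the set of points of β whose full fiber lies in U i
    set G : Set β := (π '' (U i)ᶜ)ᶜ with hG
    have hGo : IsOpen G := by
      rw [hG, isOpen_compl_iff]
      exact (((hUop i).isClosed_compl.isCompact).image hπc).isClosed
    have hGsub : G ⊆ π '' U i := by
      intro y hy
      obtain ⟨w, rfl⟩ := hπs y
      rcases Classical.em (w ∈ U i) with h | h
      · exact ⟨w, h, rfl⟩
      · exact absurd (⟨w, h, rfl⟩ : π w ∈ π '' (U i)ᶜ) hy
    have key : (S ^ (p i).eval n) (π z) ∈ G := by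
      rw [← hconj]
      intro hmem
      obtain ⟨u, hu, hu2⟩ := hmem
      have hzi : (T ^ (p i).eval n) z ∈ Ω := Set.mem_iInter.mp hzΩ i
      have := hfiber hzi hu2
      rw [this] at hu
      exact hu (Set.mem_iInter.mp hzW i)
    exact interior_maximal hGsub hGo key
  · rintro ⟨y, hy⟩
    -- preimage of ⋂ S^{-mᵢ} (π Uᵢ)° is open and nonempty
    set V : Set β := ⋂ i : Fin d, (⇑(S ^ (p i).eval n)) ⁻¹' interior (π '' U i) with hV
    have hVo : IsOpen V := isOpen_iInter_of_finite fun i =>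
      isOpen_interior.preimage (hSc _)
    obtain ⟨x₀, hx₀⟩ := hπs y
    have hpVo : IsOpen (π ⁻¹' V) := hVo.preimage hπc
    have hpVne : (π ⁻¹' V).Nonempty := ⟨x₀, by
      simp only [Set.mem_preimage, hx₀]; exact Set.mem_iInter.mpr hy⟩
    obtain ⟨w, hwV, hwΩ⟩ := (hres n).inter_open_nonempty _ hpVo hpVne
    refine ⟨w, fun i => ?_⟩
    have h1 : (S ^ (p i).eval n) (π w) ∈ interior (π '' U i) :=
      Set.mem_iInter.mp hwV i
    have h2 : π ((T ^ (p i).eval n) w) ∈ π '' U i := by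
      rw [hconj]; exact interior_subset h1
    obtain ⟨u, hu, hu2⟩ := h2
    have hwi : (T ^ (p i).eval n) w ∈ Ω := Set.mem_iInter.mp hwΩ i
    have := hfiber hwi hu2
    rw [← this]; exact hu
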